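/- Let α_1 ∈ (1/2, 1) be irrational and set α = (α_1, 1 − α_1) ∈ ℝ². Then for every N ≥ 2 and every 1 ≤ q ≤ ∞, the two-dimensional Kronecker sequence satisfies 1 ≤ g_N(α, ℤ², ‖·‖_q) ≤ 3. -/

import Mathlib

open scoped BigOperators ENNReal NNReal

/-- Distance from a real number to the nearest integer (the torus norm on ℝ/ℤ). -/
noncomputable def nint (t : ℝ) : ℝ := |t - round t|

/-- The `L_q` distance (for `1 ≤ q ≤ ∞`) between two points of the torus `ℝ^d/ℤ^d`,
computed on representatives in `ℝ^d`. -/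
noncomputable def lqDist (q : ℝ≥0∞) {d : ℕ} (x y : Fin d → ℝ) : ℝ :=
  if q = ⊤ then ⨆ i, nint (x i - y i)
  else (∑ i, nint (x i - y i) ^ q.toReal) ^ (1 / q.toReal)

/-- The `n`-th point of the `d`-dimensional Kronecker sequence `z_n = nα + ℤ^d`
(as a representative in `ℝ^d`). -/
noncomputable def kron {d : ℕ} (α : Fin d → ℝ) (n : ℕ) : Fin d → ℝ :=
  fun c => (n : ℝ) * α c

/-- `L_q`-distance on the torus between the `i`-th and `j`-th points of the
Kronecker sequence of `α`. -/
noncomputable def kronDist (q : ℝ≥0∞) {d : ℕ} (α : Fin d → ℝ) (i j : ℕ) : ℝ :=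
  lqDist q (kron α i) (kron α j)

/-- The index `j ∈ {1, …, N} \ {i}` of the nearest neighbor of `z_i` in
`S_N = {z_1, …, z_N}` w.r.t. the `L_q` torus metric; ties are broken by taking
the largest such index. -/
noncomputable def nnIndex (q : ℝ≥0∞) {d : ℕ} (α : Fin d → ℝ) (N i : ℕ) : ℕ :=
  sSup {j : ℕ | j ∈ Finset.Icc 1 N ∧ j ≠ i ∧
    ∀ m ∈ Finset.Icc 1 N, m ≠ i → kronDist q α i j ≤ kronDist q α i m}

/-- `h_i(N) = |j - i|` where `z_j` is the nearest neighbor of `z_i` in `S_N`: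
the counting-metric distance of `z_i` to its nearest neighbor. -/
noncomputable def hFun (q : ℝ≥0∞) {d : ℕ} (α : Fin d → ℝ) (N i : ℕ) : ℕ :=
  Nat.dist (nnIndex q α N i) i

/-- `g_N(α, ℤ^d, ‖·‖_q)`: the number of distinct nearest neighbor distances
among `d_q(z_i, nn_1(z_i))`, `i = 1, …, N`. -/
noncomputable def gN (q : ℝ≥0∞) {d : ℕ} (α : Fin d → ℝ) (N : ℕ) : ℕ :=
  ((Finset.Icc 1 N).image (fun i => kronDist q α i (nnIndex q α N i))).card

/-- The Gauss map `x ↦ {1/x}` generating the continued fraction expansion. -/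
noncomputable def gaussMap (x : ℝ) : ℝ := Int.fract x⁻¹

/-- The partial quotients of the continued fraction expansion `[0; a_1, a_2, …]`
of an irrational `α ∈ (0,1)`: `a_n = ⌊1 / G^[n-1](α)⌋` (with `a_0 = 0`). -/
noncomputable def cfA (α : ℝ) : ℕ → ℕ
  | 0 => 0
  | n + 1 => (⌊(gaussMap^[n] α)⁻¹⌋).toNat

/-- The denominators of the convergents of the continued fraction of `α`:
`q_0 = 1`, `q_1 = a_1`, `q_n = a_n q_{n-1} + q_{n-2}`. -/
noncomputable def cfQ (α : ℝ) : ℕ → ℕ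
  | 0 => 1
  | 1 => cfA α 1
  | n + 2 => cfA α (n + 2) * cfQ α (n + 1) + cfQ α n

lemma nint_nonneg (t : ℝ) : 0 ≤ nint t := abs_nonneg _

lemma nint_le (t : ℝ) (m : ℤ) : nint t ≤ |t - m| := by
  rw [nint, abs_sub_round_eq_min]
  rcases le_or_gt (m : ℝ) (⌊t⌋ : ℝ) with h | h
  · have h1 : Int.fract t ≤ t - m := by
      have := Int.fract_add_floor t
      have : t - (m:ℝ) = Int.fract t + ((⌊t⌋ : ℝ) - m) := by
        rw [Int.fract]; ring
      rw [this]; linarith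
    calc min (Int.fract t) (1 - Int.fract t) ≤ Int.fract t := min_le_left _ _
      _ ≤ |t - m| := h1.trans (le_abs_self _)
  · have hm : (⌊t⌋ : ℝ) + 1 ≤ m := by exact_mod_cast Int.lt_iff_add_one_le.mp (by exact_mod_cast h)
    have h1 : 1 - Int.fract t ≤ (m : ℝ) - t := by
      have : Int.fract t = t - ⌊t⌋ := rfl
      linarith
    calc min (Int.fract t) (1 - Int.fract t) ≤ 1 - Int.fract t := min_le_right _ _
      _ ≤ |t - m| := h1.trans (by rw [abs_sub_comm]; exact le_abs_self _)

lemma nint_neg (t : ℝ) : nint (-t) = nint t := by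
  by_cases h : Int.fract t = 0
  · obtain ⟨n, hn⟩ : ∃ n : ℤ, t = n := ⟨⌊t⌋, by rw [← Int.fract_add_floor t, h]; simp⟩
    subst hn
    rw [nint, nint, ← Int.cast_neg, round_intCast, round_intCast]
    simp
  · rw [nint, nint, abs_sub_round_eq_min, abs_sub_round_eq_min, Int.fract_neg h]
    rw [min_comm]; ring_nf

lemma nint_add_int (t : ℝ) (m : ℤ) : nint (t + m) = nint t := by
  rw [nint, nint, round_add_intCast]; push_cast; ring_nf

noncomputable def thAux (α : ℝ) (k : ℕ) : ℝ := (k:ℝ)*α - round ((k:ℝ)*α)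
noncomputable def phAux (α : ℝ) (k : ℕ) : ℝ := |thAux α k|

lemma phAux_eq_nint (α : ℝ) (k : ℕ) : phAux α k = nint ((k:ℝ)*α) := rfl

section CF
variable {α : ℝ} (hirr : Irrational α)
include hirr

lemma thAux_irr {k : ℕ} (hk : 1 ≤ k) : Irrational (thAux α k) :=
  ((hirr.natCast_mul (by omega)).sub_intCast _)

lemma thAux_abs_lt {k : ℕ} (hk : 1 ≤ k) : |thAux α k| < 1/2 := by
  have h1 : |thAux α k| ≤ 1/2 := abs_sub_round _
  rcases h1.lt_or_eq with h | h
  · exact h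
  · exfalso
    have hi := thAux_irr hirr hk
    rcases abs_eq (by norm_num : (0:ℝ) ≤ 1/2) |>.mp h with h2 | h2
    · exact (hi.ne_rat (1/2)) (by rw [h2]; norm_num)
    · exact (hi.ne_rat (-(1/2))) (by rw [h2]; push_cast; norm_num)

lemma thAux_ne_zero {k : ℕ} (hk : 1 ≤ k) : thAux α k ≠ 0 :=
  (thAux_irr hirr hk).ne_zero

lemma phAux_pos {k : ℕ} (hk : 1 ≤ k) : 0 < phAux α k :=
  abs_pos.mpr (thAux_ne_zero hirr hk)

omit hirr in
lemma thAux_eq {n : ℕ} {x : ℝ} {m : ℤ} (h : (n:ℝ)*α = x + m) (hx : |x| < 1/2) :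
    thAux α n = x ∧ round ((n:ℝ)*α) = m := by
  have hr : round ((n:ℝ)*α) = m := by
    rw [h, round_add_intCast, round_eq_zero_iff.mpr, zero_add]
    constructor
    · linarith [neg_abs_le x]
    · linarith [le_abs_self x]
  exact ⟨by rw [thAux, hr, h]; push_cast; ring, hr⟩

lemma phAux_inj {k l : ℕ} (hk : 1 ≤ k) (hl : 1 ≤ l) (h : phAux α k = phAux α l) : k = l := by
  by_contra hne
  rcases abs_eq_abs.mp h with h2 | h2
  · have hd : ((k:ℤ) - l : ℤ) ≠ 0 := by
      intro hz; apply hne; omega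
    have : (((k:ℤ) - l : ℤ) : ℝ) * α = ((round ((k:ℝ)*α) - round ((l:ℝ)*α) : ℤ) : ℝ) := by
      unfold thAux at h2; push_cast; linarith
    exact (hirr.intCast_mul hd).ne_int _ this
  · have hd : ((k:ℤ) + l : ℤ) ≠ 0 := by omega
    have : (((k:ℤ) + l : ℤ) : ℝ) * α = ((round ((k:ℝ)*α) + round ((l:ℝ)*α) : ℤ) : ℝ) := by
      unfold thAux at h2; push_cast; linarith
    exact (hirr.intCast_mul hd).ne_int _ this

lemma keyLemma {k1 k2 j : ℕ} (hk1 : 1 ≤ k1) (h12 : k1 < k2)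
    (hmin : ∀ t, 1 ≤ t → t < k2 → phAux α k1 ≤ phAux α t)
    (hlt : phAux α k2 < phAux α k1)
    (hj : 1 ≤ j) (hphj : phAux α j < phAux α k2) :
    k1 + k2 ≤ j := by
  set θ1 := thAux α k1 with hθ1
  set θ2 := thAux α k2 with hθ2
  set θj := thAux α j with hθj
  set p1 : ℤ := round ((k1:ℝ)*α) with hp1
  set p2 : ℤ := round ((k2:ℝ)*α) with hp2
  set pj : ℤ := round ((j:ℝ)*α) with hpj
  have hk2 : 1 ≤ k2 := by omega
  have ha1 : |θ1| < 1/2 := thAux_abs_lt hirr hk1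
  have ha2 : |θ2| < 1/2 := thAux_abs_lt hirr hk2
  have haj : |θj| < 1/2 := thAux_abs_lt hirr hj
  have hpos1 : 0 < |θ1| := phAux_pos hirr hk1
  have hpos2 : 0 < |θ2| := phAux_pos hirr hk2
  have hltA : |θ2| < |θ1| := hlt
  have hphjA : |θj| < |θ2| := hphj
  have hd1 : θ1 = (k1:ℝ)*α - p1 := rfl
  have hd2 : θ2 = (k2:ℝ)*α - p2 := rfl
  have hdj : θj = (j:ℝ)*α - pj := rfl
  -- Step A : opposite signs
  have hsign : θ1 * θ2 < 0 := by
    rcases lt_trichotomy (θ1 * θ2) 0 with h | h | h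
    · exact h
    · exact absurd (mul_eq_zero.mp h)
        (by push_neg; exact ⟨abs_pos.mp hpos1, abs_pos.mp hpos2⟩)
    · exfalso
      -- same signs
      set t : ℕ := k2 - k1 with hts
      have htk : (t:ℝ) = (k2:ℝ) - k1 := by rw [hts, Nat.cast_sub h12.le]
      have hteq : (t:ℝ)*α = (θ2 - θ1) + ((p2 - p1 : ℤ) : ℝ) := by
        rw [htk, hd1, hd2]; push_cast; ring
      have habs : |θ2 - θ1| < 1/2 := by
        rcases mul_pos_iff.mp h with ⟨h1, h2⟩ | ⟨h1, h2⟩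
        · rw [abs_of_pos h1] at ha1 hltA
          rw [abs_of_pos h2] at hltA
          rw [abs_of_neg (by linarith : θ2 - θ1 < 0)]
          linarith
        · rw [abs_of_neg h1] at ha1 hltA
          rw [abs_of_neg h2] at hltA
          rw [abs_of_pos (by linarith : 0 < θ2 - θ1)]
          linarith
      have ht1 : 1 ≤ t := by omega
      have ht2 : t < k2 := by omega
      have hth := (thAux_eq (α := α) hteq habs).1
      have hmt : |θ1| ≤ |θ2 - θ1| := by
        have h9 := hmin t ht1 ht2
        simpa [phAux, hth] using h9
      rcases mul_pos_iff.mp h with ⟨h1, h2⟩ | ⟨h1, h2⟩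
      · rw [abs_of_pos h1] at hmt hltA
        rw [abs_of_pos h2] at hltA hpos2
        rw [abs_of_neg (by linarith : θ2 - θ1 < 0)] at hmt
        linarith
      · rw [abs_of_neg h1] at hmt hltA
        rw [abs_of_neg h2] at hltA hpos2
        rw [abs_of_pos (by linarith : 0 < θ2 - θ1)] at hmt
        linarith
  -- Dirichlet: k2 * |θ1| ≤ 1
  have hDir : (k2:ℝ) * |θ1| ≤ 1 := by
    obtain ⟨j', k', hk'0, hk'le, hab⟩ :=
      Real.exists_int_int_abs_mul_sub_le α (n := k2 - 1) (by omega)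
    set t : ℕ := k'.toNat with hts
    have ht1 : 1 ≤ t := by omega
    have ht2 : t < k2 := by omega
    have htr : ((t:ℕ):ℝ) = ((k':ℤ):ℝ) := by
      rw [hts]; norm_cast; exact Int.toNat_of_nonneg hk'0.le
    have hph : phAux α t ≤ 1/(k2:ℝ) := by
      have h1 : phAux α t ≤ |(t:ℝ)*α - j'| := nint_le _ _
      rw [htr] at h1
      have h2 : ((k2 - 1 : ℕ) : ℝ) + 1 = (k2:ℝ) := by
        rw [Nat.cast_sub hk2]; push_cast; ring
      rw [h2] at hab
      exact h1.trans hab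
    have hm := hmin t ht1 ht2
    have hk2p : (0:ℝ) < k2 := by positivity
    have h3 : |θ1| ≤ 1/(k2:ℝ) := le_trans hm hph
    rw [le_div_iff₀ hk2p] at h3
    linarith
  -- determinant
  set e : ℤ := k1 * p2 - k2 * p1 with hedef
  have heR : (e:ℝ) = (k2:ℝ)*θ1 - (k1:ℝ)*θ2 := by
    rw [hedef, hd1, hd2]; push_cast; ring
  have hk1θ2 : (k1:ℝ)*|θ2| < (k2:ℝ)*|θ1| := by
    have hc : (k1:ℝ) < k2 := by exact_mod_cast h12
    have h0 : (0:ℝ) < k1 := by exact_mod_cast hk1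
    calc (k1:ℝ)*|θ2| < (k1:ℝ)*|θ1| := mul_lt_mul_of_pos_left hltA h0
      _ < (k2:ℝ)*|θ1| := mul_lt_mul_of_pos_right hc hpos1
  have he_ne : e ≠ 0 := by
    intro h0
    rw [h0] at heR
    have h4 : (k2:ℝ)*θ1 = (k1:ℝ)*θ2 := by
      have := heR.symm; push_cast at this; linarith
    have : (k2:ℝ)*|θ1| = (k1:ℝ)*|θ2| := by
      rw [← abs_of_nonneg (by positivity : (0:ℝ) ≤ (k2:ℝ)), ← abs_of_nonneg
        (by positivity : (0:ℝ) ≤ (k1:ℝ)), ← abs_mul, ← abs_mul, h4]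
    linarith
  have he_abs : |(e:ℝ)| < 2 := by
    have h1 : |(e:ℝ)| ≤ (k2:ℝ)*|θ1| + (k1:ℝ)*|θ2| := by
      rw [heR]
      calc |(k2:ℝ)*θ1 - (k1:ℝ)*θ2| ≤ |(k2:ℝ)*θ1| + |(k1:ℝ)*θ2| := abs_sub _ _
        _ = (k2:ℝ)*|θ1| + (k1:ℝ)*|θ2| := by
            rw [abs_mul, abs_mul, abs_of_nonneg (by positivity : (0:ℝ) ≤ (k2:ℝ)),
              abs_of_nonneg (by positivity : (0:ℝ) ≤ (k1:ℝ))]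
    linarith
  have he : e = 1 ∨ e = -1 := by
    have h5 : |e| < 2 := by exact_mod_cast (by push_cast; exact he_abs : ((|e|:ℤ):ℝ) < 2)
    rcases abs_lt.mp h5 with ⟨hl, hr⟩
    omega
  -- decomposition
  set a : ℤ := e * (k1 * pj - j * p1) with hadef
  set b : ℤ := e * (j * p2 - k2 * pj) with hbdef
  have hee : e * e = 1 := by rcases he with h | h <;> rw [h] <;> ring
  have hjz : (j:ℤ) = a * k2 + b * k1 := by
    have h6 : a * k2 + b * k1 = (e * e) * j := by rw [hadef, hbdef, hedef]; ring
    rw [hee] at h6; omega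
  have hpjz : pj = a * p2 + b * p1 := by
    have h6 : a * p2 + b * p1 = (e * e) * pj := by rw [hadef, hbdef, hedef]; ring
    rw [hee] at h6; omega
  have hθjd : θj = (a:ℝ) * θ2 + (b:ℝ) * θ1 := by
    have h7 : ((j:ℕ):ℝ) = (a:ℝ) * k2 + (b:ℝ) * k1 := by exact_mod_cast hjz
    have h8 : ((pj:ℤ):ℝ) = (a:ℝ) * p2 + (b:ℝ) * p1 := by exact_mod_cast hpjz
    rw [hdj, hd1, hd2, h7, h8]; ring
  -- sign analysis
  have hb1 : 1 ≤ b := by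
    by_contra hb
    push_neg at hb
    have hb0 : b ≤ 0 := by omega
    rcases le_or_gt a 0 with ha0 | ha0
    · have : (j:ℤ) ≤ 0 := by
        rw [hjz]
        have : a * k2 ≤ 0 := mul_nonpos_of_nonpos_of_nonneg ha0 (by positivity)
        have : b * k1 ≤ 0 := mul_nonpos_of_nonpos_of_nonneg hb0 (by positivity)
        omega
      omega
    · have haR : (1:ℝ) ≤ (a:ℝ) := by exact_mod_cast ha0
      have hbR : (b:ℝ) ≤ 0 := by exact_mod_cast hb0
      rcases mul_neg_iff.mp hsign with ⟨h1, h2⟩ | ⟨h1, h2⟩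
      · -- θ1 > 0, θ2 < 0
        have t1 : (a:ℝ) * θ2 ≤ 1 * θ2 := mul_le_mul_of_nonpos_right haR h2.le
        have t2 : (b:ℝ) * θ1 ≤ 0 := mul_nonpos_of_nonpos_of_nonneg hbR h1.le
        have h3 : θj ≤ θ2 := by rw [hθjd]; linarith
        have h4 : -θ2 ≤ |θj| := by
          have := neg_abs_le θj; linarith
        rw [abs_of_neg h2] at hphjA
        linarith
      · -- θ1 < 0, θ2 > 0
        have t1 : 1 * θ2 ≤ (a:ℝ) * θ2 := mul_le_mul_of_nonneg_right haR h2.le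
        have t2 : 0 ≤ (b:ℝ) * θ1 := by
          have := mul_nonneg (neg_nonneg.mpr hbR) (neg_nonneg.mpr h1.le)
          rwa [neg_mul_neg] at this
        have h3 : θ2 ≤ θj := by rw [hθjd]; linarith
        have h4 : θ2 ≤ |θj| := h3.trans (le_abs_self _)
        rw [abs_of_pos h2] at hphjA
        linarith
  have ha1' : 1 ≤ a := by
    by_contra ha
    push_neg at ha
    have ha0 : a ≤ 0 := by omega
    have haR : (a:ℝ) ≤ 0 := by exact_mod_cast ha0
    have hbR : (1:ℝ) ≤ (b:ℝ) := by exact_mod_cast hb1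
    rcases mul_neg_iff.mp hsign with ⟨h1, h2⟩ | ⟨h1, h2⟩
    · -- θ1 > 0, θ2 < 0
      have t1 : 1 * θ1 ≤ (b:ℝ) * θ1 := mul_le_mul_of_nonneg_right hbR h1.le
      have t2 : 0 ≤ (a:ℝ) * θ2 := by
        have := mul_nonneg (neg_nonneg.mpr haR) (neg_nonneg.mpr h2.le)
        rwa [neg_mul_neg] at this
      have h3 : θ1 ≤ θj := by rw [hθjd]; linarith
      have h4 : θ1 ≤ |θj| := h3.trans (le_abs_self _)
      rw [abs_of_pos h1] at hltA
      rw [abs_of_neg h2] at hphjA hltA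
      linarith
    · -- θ1 < 0, θ2 > 0
      have t1 : (b:ℝ) * θ1 ≤ 1 * θ1 := mul_le_mul_of_nonpos_right hbR h1.le
      have t2 : (a:ℝ) * θ2 ≤ 0 := mul_nonpos_of_nonpos_of_nonneg haR h2.le
      have h3 : θj ≤ θ1 := by rw [hθjd]; linarith
      have h4 : -θ1 ≤ |θj| := by
        have := neg_abs_le θj; linarith
      rw [abs_of_neg h1] at hltA
      rw [abs_of_pos h2] at hphjA hltA
      linarith
  -- conclude
  have : (k1:ℤ) + k2 ≤ j := by
    rw [hjz]
    have h1 : (k2:ℤ) ≤ a * k2 := le_mul_of_one_le_left (by positivity) ha1'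
    have h2 : (k1:ℤ) ≤ b * k1 := le_mul_of_one_le_left (by positivity) hb1
    omega
  exact_mod_cast this

/-- no three records in `(m, 2m]`. -/
lemma rec3 {m j1 j2 j3 : ℕ} (h1 : m < j1) (h12 : j1 < j2) (h23 : j2 < j3)
    (h3u : j3 ≤ 2*m)
    (hr1 : ∀ t, 1 ≤ t → t < j1 → phAux α j1 < phAux α t)
    (hr2 : ∀ t, 1 ≤ t → t < j2 → phAux α j2 < phAux α t)
    (hr3 : ∀ t, 1 ≤ t → t < j3 → phAux α j3 < phAux α t) : False := by
  have hj1 : 1 ≤ j1 := by omega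
  obtain ⟨k1, hk1mem, hk1min⟩ :=
    Finset.exists_min_image (Finset.Icc 1 (j2 - 1)) (phAux α)
      ⟨1, Finset.mem_Icc.mpr (by omega)⟩
  rw [Finset.mem_Icc] at hk1mem
  have hmin : ∀ t, 1 ≤ t → t < j2 → phAux α k1 ≤ phAux α t := fun t h1t h2t =>
    hk1min t (Finset.mem_Icc.mpr (by omega))
  have hk1ge : j1 ≤ k1 := by
    by_contra hc
    push_neg at hc
    exact absurd (hmin j1 hj1 h12) (not_le.mpr (hr1 k1 hk1mem.1 hc))
  have h3 := keyLemma hirr hk1mem.1 (show k1 < j2 by omega) hmin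
    (hr2 k1 hk1mem.1 (by omega)) (show 1 ≤ j3 by omega)
    (hr3 j2 (by omega) h23)
  omega

end CF

section Coord
variable {α1 : ℝ}


lemma coord_eq (i j : ℕ) (c : Fin 2) :
    nint ((kron ![α1, 1-α1] i) c - (kron ![α1, 1-α1] j) c) = phAux α1 (Nat.dist i j) := by
  obtain ⟨ε, hε, hsgn⟩ : ∃ ε : ℤ, ((i:ℝ) - j) = (ε:ℝ) ∧
      (ε = (Nat.dist i j : ℤ) ∨ ε = -(Nat.dist i j : ℤ)) := by
    rcases le_or_gt j i with h | h
    · exact ⟨(i:ℤ) - j, by push_cast; ring, Or.inl (by rw [Nat.dist_eq_sub_of_le_right h]; omega)⟩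
    · exact ⟨(i:ℤ) - j, by push_cast; ring, Or.inr (by rw [Nat.dist_eq_sub_of_le h.le]; omega)⟩
  have key : ∀ x : ℝ, nint ((ε:ℝ) * x) = nint ((Nat.dist i j : ℝ) * x) := by
    intro x
    rcases hsgn with h | h
    · rw [h]; push_cast; ring_nf
    · rw [h]; push_cast
      rw [neg_mul, nint_neg]
  have hsplit : ∀ v : ℝ, (kron ![α1, 1-α1] i) c - (kron ![α1, 1-α1] j) c
      = ((i:ℝ) - j) * (![α1, 1-α1] c) := by
    intro _; simp only [kron]; ring
  rw [hsplit 0, hε]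
  fin_cases c
  · show nint ((ε:ℝ) * α1) = phAux α1 (Nat.dist i j)
    exact key α1
  · show nint ((ε:ℝ) * (1 - α1)) = phAux α1 (Nat.dist i j)
    have h9 : (ε:ℝ) * (1 - α1) = -((ε:ℝ) * α1) + ((ε:ℤ):ℝ) := by push_cast; ring
    rw [h9, nint_add_int, nint_neg]
    exact key α1

lemma kronDist_eq (q : ℝ≥0∞) (hq : 1 ≤ q) :
    ∃ c : ℝ, 0 < c ∧ ∀ i j : ℕ,
      kronDist q ![α1, 1-α1] i j = c * phAux α1 (Nat.dist i j) := by
  by_cases hT : q = ⊤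
  · refine ⟨1, one_pos, fun i j => ?_⟩
    rw [kronDist, lqDist, if_pos hT, one_mul]
    have : ∀ c : Fin 2, nint ((kron ![α1, 1-α1] i) c - (kron ![α1, 1-α1] j) c)
        = phAux α1 (Nat.dist i j) := coord_eq i j
    simp only [this]
    exact ciSup_const
  · have hp1 : 1 ≤ q.toReal := by
      have := ENNReal.toReal_mono hT hq
      simpa using this
    have hp0 : 0 < q.toReal := by linarith
    refine ⟨(2:ℝ) ^ (1/q.toReal), Real.rpow_pos_of_pos two_pos _, fun i j => ?_⟩
    rw [kronDist, lqDist, if_neg hT]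
    have hco : ∀ c : Fin 2, nint ((kron ![α1, 1-α1] i) c - (kron ![α1, 1-α1] j) c)
        = phAux α1 (Nat.dist i j) := coord_eq i j
    simp only [hco]
    rw [Fin.sum_univ_two]
    set y := phAux α1 (Nat.dist i j) with hy
    have hy0 : 0 ≤ y := abs_nonneg _
    have h2 : y ^ q.toReal + y ^ q.toReal = 2 * y ^ q.toReal := by ring
    rw [h2, Real.mul_rpow (by norm_num) (Real.rpow_nonneg hy0 _),
      ← Real.rpow_mul hy0, mul_one_div_cancel hp0.ne', Real.rpow_one]

end Coord

/-- For irrational `α_1 ∈ (1/2, 1)` and `α = (α_1, 1 - α_1)`, for every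
`N ≥ 2` and `1 ≤ q ≤ ∞`, `1 ≤ g_N(α, ℤ², ‖·‖_q) ≤ 3`. -/
theorem statement2 (α1 : ℝ) (hmem : α1 ∈ Set.Ioo (1/2 : ℝ) 1) (hirr : Irrational α1)
    (N : ℕ) (hN : 2 ≤ N) (q : ℝ≥0∞) (hq : 1 ≤ q) :
    1 ≤ gN q ![α1, 1 - α1] N ∧ gN q ![α1, 1 - α1] N ≤ 3 := by
  classical
  obtain ⟨c, hc, hkd⟩ := kronDist_eq (α1 := α1) q hq
  set φ := phAux α1 with hφ
  set m : ℕ := N / 2 with hm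
  have hm1 : 1 ≤ m := by omega
  have hNm : N - 1 ≤ 2 * m := by omega
  obtain ⟨r0, hr0mem, hr0min⟩ := Finset.exists_min_image (Finset.Icc 1 m) φ
    ⟨1, Finset.mem_Icc.mpr (by omega)⟩
  rw [Finset.mem_Icc] at hr0mem
  set R : Finset ℕ := (Finset.Ioc m (N-1)).filter
      (fun j => ∀ t, 1 ≤ t → t < j → φ j < φ t) with hR
  have hRcard : R.card ≤ 2 := by
    by_contra hcard
    push_neg at hcard
    have h3 : 3 ≤ R.card := hcard
    obtain ⟨j1, j2, j3, h01, h12', hm0, hm1, hm2⟩ :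
        ∃ j1 j2 j3, j1 < j2 ∧ j2 < j3 ∧ j1 ∈ R ∧ j2 ∈ R ∧ j3 ∈ R :=
      ⟨_, _, _, (R.orderEmbOfCardLe h3).strictMono (by decide),
        (R.orderEmbOfCardLe h3).strictMono (by decide),
        R.orderEmbOfCardLe_mem h3 0, R.orderEmbOfCardLe_mem h3 1,
        R.orderEmbOfCardLe_mem h3 2⟩
    simp only [hR, Finset.mem_filter, Finset.mem_Ioc] at hm0 hm1 hm2
    exact rec3 hirr hm0.1.1 h01 h12' (le_trans hm2.1.2 hNm) hm0.2 hm1.2 hm2.2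
  set T : Finset ℝ := insert (c * φ r0) (R.image (fun j => c * φ j)) with hT
  have hTcard : T.card ≤ 3 := by
    calc T.card ≤ (R.image (fun j => c * φ j)).card + 1 := Finset.card_insert_le _ _
      _ ≤ R.card + 1 := Nat.add_le_add_right Finset.card_image_le 1
      _ ≤ 3 := by omega
  have hsub : (Finset.Icc 1 N).image
      (fun i => kronDist q ![α1, 1-α1] i (nnIndex q ![α1, 1-α1] N i)) ⊆ T := by
    rw [Finset.image_subset_iff]
    intro i hi
    rw [Finset.mem_Icc] at hi
    set S : Set ℕ := {j : ℕ | j ∈ Finset.Icc 1 N ∧ j ≠ i ∧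
      ∀ m' ∈ Finset.Icc 1 N, m' ≠ i →
        kronDist q ![α1, 1-α1] i j ≤ kronDist q ![α1, 1-α1] i m'} with hS
    have hSn : S.Nonempty := by
      obtain ⟨w, hwmem, hwmin⟩ := Finset.exists_min_image
        ((Finset.Icc 1 N).filter (fun j => j ≠ i))
        (fun j => kronDist q ![α1, 1-α1] i j)
        ⟨if i = 1 then 2 else 1, by
          rw [Finset.mem_filter, Finset.mem_Icc]
          split_ifs with h <;> omega⟩
      rw [Finset.mem_filter] at hwmem
      exact ⟨w, hwmem.1, hwmem.2,
        fun m' hm' hm'i => hwmin m' (Finset.mem_filter.mpr ⟨hm', hm'i⟩)⟩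
    have hSb : BddAbove S := ⟨N, fun x hx => (Finset.mem_Icc.mp hx.1).2⟩
    have hni : nnIndex q ![α1, 1-α1] N i ∈ S := Nat.sSup_mem hSn hSb
    set n := nnIndex q ![α1, 1-α1] N i with hn
    obtain ⟨hni1, hni2, hni3⟩ := hni
    rw [Finset.mem_Icc] at hni1
    set Mi := max (i - 1) (N - i) with hMi
    have hMiN : Mi ≤ N - 1 := by omega
    have hMim : m ≤ Mi := by omega
    obtain ⟨r, hrmem, hrmin⟩ := Finset.exists_min_image (Finset.Icc 1 Mi) φ
      ⟨1, Finset.mem_Icc.mpr (by omega)⟩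
    rw [Finset.mem_Icc] at hrmem
    have hdist : 1 ≤ Nat.dist i n ∧ Nat.dist i n ≤ Mi := by
      simp only [Nat.dist, hMi]; omega
    obtain ⟨w, hw1, hwni, hwd⟩ : ∃ w, w ∈ Finset.Icc 1 N ∧ w ≠ i ∧ Nat.dist i w = r := by
      rcases le_or_gt r (i-1) with h | h
      · exact ⟨i - r, Finset.mem_Icc.mpr (by omega), by omega,
          by simp only [Nat.dist]; omega⟩
      · have hrNi : r ≤ N - i := by omega
        exact ⟨i + r, Finset.mem_Icc.mpr (by omega), by omega,
          by simp only [Nat.dist]; omega⟩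
    have hval : φ (Nat.dist i n) = φ r := by
      have h1 : φ r ≤ φ (Nat.dist i n) := hrmin _ (Finset.mem_Icc.mpr hdist)
      have h2 := hni3 w hw1 hwni
      rw [hkd, hkd, hwd] at h2
      have h3 : φ (Nat.dist i n) ≤ φ r := le_of_mul_le_mul_left h2 hc
      exact le_antisymm h3 h1
    show kronDist q ![α1, 1-α1] i n ∈ T
    rw [hkd, hval]
    rcases le_or_gt r m with h | h
    · have hre : φ r = φ r0 := le_antisymm
        (hrmin r0 (Finset.mem_Icc.mpr (by omega)))
        (hr0min r (Finset.mem_Icc.mpr (by omega)))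
      rw [hT, hre]
      exact Finset.mem_insert_self _ _
    · have hrR : r ∈ R := by
        simp only [hR, Finset.mem_filter, Finset.mem_Ioc]
        refine ⟨⟨h, by omega⟩, fun t ht1 ht2 => ?_⟩
        have hle := hrmin t (Finset.mem_Icc.mpr (by omega))
        rcases hle.lt_or_eq with hlt2 | heq
        · exact hlt2
        · exact absurd (phAux_inj hirr hrmem.1 ht1 heq) (by omega)
      rw [hT]
      exact Finset.mem_insert_of_mem (Finset.mem_image_of_mem _ hrR)
  constructor
  · rw [gN]
    exact Finset.card_pos.mpr
      (Finset.Nonempty.image ⟨1, Finset.mem_Icc.mpr (by omega)⟩ _)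
  · rw [gN]
    exact le_trans (Finset.card_le_card hsub) hTcard
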